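/- arXiv:2107.07680 — 5 statements merged into one kernel-verified Lean document; each statement's English description precedes it below -/
import Mathlib

section
/- Let f : (0,∞) → ℝ be smooth and let F : (0,∞) → ℝ be an antiderivative of s ↦ s·f(s) − 1. If J ⊆ ℝ is an open interval and z : J → ℂ is differentiable with z(t) ≠ 0 and z′(t) = i·z(t)·f(|z(t)|) − i for all t ∈ J, then the function t ↦ Re z(t) − F(|z(t)|) − |z(t)| is constant on J (i.e. H_f(z) = Re z − F(|z|) − |z| is a first integral of the ODE). -/
open Set Filter Topology

/-- `H_f(z) = Re z − F(|z|) − |z|` is a first integral of the ODE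
`z′ = i·z·f(|z|) − i` on ℂ \ {0}. -/
theorem stmt0 (f F : ℝ → ℝ)
    (hf : ContDiffOn ℝ (⊤ : ℕ∞) f (Set.Ioi 0))
    (hF : ∀ s ∈ Set.Ioi (0:ℝ), HasDerivAt F (s * f s - 1) s)
    (J : Set ℝ) (hJopen : IsOpen J) (hJconn : J.OrdConnected)
    (z : ℝ → ℂ)
    (hz0 : ∀ t ∈ J, z t ≠ 0)
    (hz : ∀ t ∈ J, HasDerivAt z
      (Complex.I * z t * (f (‖z t‖) : ℂ) - Complex.I) t) :
    ∀ t₁ ∈ J, ∀ t₂ ∈ J,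
      (z t₁).re - F (‖z t₁‖) - ‖z t₁‖
        = (z t₂).re - F (‖z t₂‖) - ‖z t₂‖ := by
  have hconv : Convex ℝ J := hJconn.convex
  set H : ℝ → ℝ := fun t => (z t).re - F (‖z t‖) - ‖z t‖ with hH
  have key : ∀ t ∈ J, HasDerivAt H 0 t := by
    intro t ht
    have hzt := hz t ht
    have hz0t := hz0 t ht
    set r := ‖z t‖ with hr
    have hrpos : 0 < r := norm_pos_iff.mpr hz0t
    set x := (z t).re with hx0
    set y := (z t).im with hy0
    -- derivative of real part
    have hx : HasDerivAt (fun t => (z t).re) (-(y * f r)) t := by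
      have := Complex.reCLM.hasFDerivAt.comp_hasDerivAt t hzt
      refine this.congr_deriv ?_
      simp [Complex.mul_re, Complex.sub_re, hy0]
    have hy : HasDerivAt (fun t => (z t).im) (x * f r - 1) t := by
      have := Complex.imCLM.hasFDerivAt.comp_hasDerivAt t hzt
      refine this.congr_deriv ?_
      simp [Complex.mul_im, Complex.sub_im, hx0]
    -- derivative of |z|
    have hsq : HasDerivAt (fun t => (z t).re * (z t).re + (z t).im * (z t).im)
        (-(y * f r) * x + x * (-(y * f r)) + ((x * f r - 1) * y + y * (x * f r - 1))) t :=
      (hx.mul hx).add (hy.mul hy)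
    have hne : (z t).re * (z t).re + (z t).im * (z t).im ≠ 0 := by
      have : Complex.normSq (z t) ≠ 0 := (Complex.normSq_pos.2 hz0t).ne'
      simpa [Complex.normSq_apply] using this
    have habs : HasDerivAt (fun t => ‖z t‖) (-(y / r)) t := by
      have h1 := (Real.hasDerivAt_sqrt hne).comp t hsq
      have heq : (fun t => ‖z t‖) =
          fun t => Real.sqrt ((z t).re * (z t).re + (z t).im * (z t).im) := by
        funext s
        rw [Complex.norm_def, Complex.normSq_apply]
      rw [heq]
      refine h1.congr_deriv ?_
      have hrs : Real.sqrt ((z t).re * (z t).re + (z t).im * (z t).im) = r := by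
        rw [hr, Complex.norm_def, Complex.normSq_apply]
      rw [hrs]
      field_simp
      ring
    -- derivative of F ∘ |z|
    have hFr : HasDerivAt (fun t => F (‖z t‖))
        ((r * f r - 1) * (-(y / r))) t :=
      (hF r hrpos).comp t habs
    have : HasDerivAt H (-(y * f r) - (r * f r - 1) * (-(y / r)) - (-(y / r))) t :=
      (hx.sub hFr).sub habs
    convert this using 1
    field_simp
    ring
  intro t₁ h₁ t₂ h₂
  have := hconv.norm_image_sub_le_of_norm_hasDerivWithin_le (C := 0)
    (fun s hs => ((key s hs).hasDerivWithinAt)) (fun s hs => by simp) h₁ h₂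
  have h0 : ‖H t₂ - H t₁‖ ≤ 0 := by simpa using this
  have : H t₂ = H t₁ := by
    have := norm_sub_eq_zero_iff.1 (le_antisymm h0 (norm_nonneg _))
    exact this
  simpa [hH] using this.symm
end

section
/- Let f : (0,∞) → ℝ be smooth, J ⊆ ℝ an open interval, and c : J → ℂ twice differentiable with |c′(t)| = 1, c(t) ≠ 0 and c″(t) = i·f(|c(t)|)·c′(t) for all t ∈ J (so c is a unit-speed curve whose curvature at time t equals f(|c(t)|)). Then the function z(t) := −i·conj(c(t))·c′(t) satisfies |z(t)| = |c(t)| and z′(t) = i·z(t)·f(|z(t)|) − i for all t ∈ J. -/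
open Set Filter Topology

/-- If `c` is a unit-speed curve (away from the origin) whose curvature at time `t`
equals `f(|c(t)|)`, then `z(t) = −i·conj(c(t))·c′(t)` satisfies `|z| = |c|` and solves
`z′ = i·z·f(|z|) − i`. -/
theorem stmt1 (f : ℝ → ℝ)
    (hf : ContDiffOn ℝ (⊤ : ℕ∞) f (Set.Ioi 0))
    (J : Set ℝ) (hJopen : IsOpen J) (hJconn : J.OrdConnected)
    (c c' : ℝ → ℂ)
    (hc : ∀ t ∈ J, HasDerivAt c (c' t) t)
    (hc' : ∀ t ∈ J, HasDerivAt c'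
      (Complex.I * (f ‖c t‖ : ℂ) * c' t) t)
    (hunit : ∀ t ∈ J, ‖c' t‖ = 1)
    (hne : ∀ t ∈ J, c t ≠ 0) :
    ∀ t ∈ J,
      ‖-Complex.I * (starRingEnd ℂ) (c t) * c' t‖ = ‖c t‖ ∧
      HasDerivAt (fun u => -Complex.I * (starRingEnd ℂ) (c u) * c' u)
        (Complex.I * (-Complex.I * (starRingEnd ℂ) (c t) * c' t) *
            (f ‖-Complex.I * (starRingEnd ℂ) (c t) * c' t‖ : ℂ)
          - Complex.I) t := by
  intro t ht
  have habs : ‖-Complex.I * (starRingEnd ℂ) (c t) * c' t‖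
      = ‖c t‖ := by
    simp [map_mul, hunit t ht]
  refine ⟨habs, ?_⟩
  -- derivative of conj ∘ c
  have hconj : HasDerivAt (fun u => (starRingEnd ℂ) (c u)) ((starRingEnd ℂ) (c' t)) t := by
    have := (Complex.conjCLE.hasFDerivAt (x := c t)).comp_hasDerivAt t (hc t ht)
    exact this
  -- derivative of u ↦ conj(c u) * c' u
  have hprod : HasDerivAt (fun u => (starRingEnd ℂ) (c u) * c' u)
      ((starRingEnd ℂ) (c' t) * c' t
        + (starRingEnd ℂ) (c t) * (Complex.I * (f ‖c t‖ : ℂ) * c' t)) t :=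
    hconj.mul (hc' t ht)
  have hz : HasDerivAt (fun u => -Complex.I * ((starRingEnd ℂ) (c u) * c' u))
      (-Complex.I * ((starRingEnd ℂ) (c' t) * c' t
        + (starRingEnd ℂ) (c t) * (Complex.I * (f ‖c t‖ : ℂ) * c' t))) t :=
    hprod.const_mul _
  have hcc : (starRingEnd ℂ) (c' t) * c' t = 1 := by
    have := Complex.normSq_eq_norm_sq (c' t)
    have h1 : Complex.normSq (c' t) = 1 := by rw [this, hunit t ht]; norm_num
    calc (starRingEnd ℂ) (c' t) * c' t = (Complex.normSq (c' t) : ℂ) := by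
          rw [mul_comm, Complex.mul_conj]
      _ = 1 := by rw [h1]; norm_num
  rw [habs]
  convert hz using 1
  · ext u; ring
  · rw [hcc]; ring
end

section
/- With f in the class F* (f > 0), suppose the function s ↦ F″(s)·F(s)/F′(s)², extended continuously by the value 1/2 at s = s_f, is increasing (respectively, decreasing) on (0,∞). Then: (i) the map s ↦ s* is concave (respectively, convex) on (0, s_f); (ii) the function s ↦ F′(s)²/F(s), extended continuously by the value 2·F″(s_f) at s = s_f, is increasing (respectively, decreasing) on (0,∞); and (iii) F′ is convex (respectively, concave) on (0,∞). -/
open Set Filter Topology MeasureTheory intervalIntegral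

/-- derivative nonneg from local monotonicity -/
theorem aux_deriv_nonneg {K : ℝ → ℝ} {c s : ℝ} (hd : HasDerivAt K c s) {U : Set ℝ}
    (hU : U ∈ 𝓝 s) (hm : ∀ x ∈ U, ∀ y ∈ U, x < y → K x ≤ K y) : 0 ≤ c := by
  have hslope := hasDerivAt_iff_tendsto_slope.1 hd
  have h2 : Tendsto (slope K s) (𝓝[>] s) (𝓝 c) :=
    hslope.mono_left (nhdsWithin_mono _ (fun x hx => ne_of_gt hx))
  refine ge_of_tendsto h2 ?_
  have hU' : U ∈ 𝓝[>] s := nhdsWithin_le_nhds hU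
  filter_upwards [hU', self_mem_nhdsWithin] with t htU hts
  have hsU : s ∈ U := mem_of_mem_nhds hU
  have : K s ≤ K t := hm s hsU t htU hts
  rw [slope_def_field]
  exact div_nonneg (by linarith) (by simp at hts; linarith)

theorem aux_deriv_nonpos {K : ℝ → ℝ} {c s : ℝ} (hd : HasDerivAt K c s) {U : Set ℝ}
    (hU : U ∈ 𝓝 s) (hm : ∀ x ∈ U, ∀ y ∈ U, x < y → K y ≤ K x) : c ≤ 0 := by
  have := aux_deriv_nonneg hd.neg hU (fun x hx y hy hxy => by simpa using hm x hx y hy hxy)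
  linarith

set_option maxHeartbeats 2000000 in
/-- Proposition 4.7: for f in the class F* (f > 0), with K = F″·F/(F′)² (extended by 1/2
at s_f): if K is increasing on (0,∞) then s ↦ s* is concave on (0,s_f), (F′)²/F
(extended by 2F″(s_f) at s_f) is increasing on (0,∞), and F′ is convex on (0,∞);
if K is decreasing, the respective conclusions are convex / decreasing / concave. -/
theorem stmt6 (f F : ℝ → ℝ) (sf : ℝ) (sStar ω : ℝ → ℝ)
    (hf : ContDiffOn ℝ (⊤ : ℕ∞) f (Set.Ioi 0))
    (hfpos : ∀ s ∈ Set.Ioi (0:ℝ), 0 < f s)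
    (hfderiv : ∀ s ∈ Set.Ioi (0:ℝ), deriv f s ≠ 0)
    (hF : ∀ s ∈ Set.Ioi (0:ℝ), HasDerivAt F (s * f s - 1) s)
    (hFpp : ∀ s ∈ Set.Ioi (0:ℝ), 0 < deriv (deriv F) s)
    (L0 Linf : EReal)
    (hL0 : Filter.Tendsto (fun s => ((s * f s : ℝ) : EReal)) (nhdsWithin 0 (Set.Ioi 0)) (nhds L0))
    (hL0lt : L0 < 1)
    (hLinf : Filter.Tendsto (fun s => ((s * f s : ℝ) : EReal)) Filter.atTop (nhds Linf))
    (hLinfgt : 1 < Linf)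
    (hsfpos : 0 < sf) (hsf1 : sf * f sf = 1) (hFsf : F sf = 0)
    (hsStar : ∀ s ∈ Set.Ioo 0 sf, sf < sStar s ∧ F (sStar s) = F s)
    (hω : ∀ s ∈ Set.Ioo 0 sf, ω s = (1/Real.pi) * ∫ u in s..(sStar s),
      u * f u / (Real.sqrt (F s - F u) * Real.sqrt (2*u + F u - F s)))
    (K : ℝ → ℝ)
    (hK : ∀ s ∈ Set.Ioi (0:ℝ), s ≠ sf → K s = deriv (deriv F) s * F s / (deriv F s)^2)
    (hKsf : K sf = 1/2) :
    (StrictMonoOn K (Set.Ioi 0) →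
      ConcaveOn ℝ (Set.Ioo 0 sf) sStar ∧
      (∀ G : ℝ → ℝ, (∀ s ∈ Set.Ioi (0:ℝ), s ≠ sf → G s = (deriv F s)^2 / F s) →
        G sf = 2 * deriv (deriv F) sf → StrictMonoOn G (Set.Ioi 0)) ∧
      ConvexOn ℝ (Set.Ioi 0) (deriv F)) ∧
    (StrictAntiOn K (Set.Ioi 0) →
      ConvexOn ℝ (Set.Ioo 0 sf) sStar ∧
      (∀ G : ℝ → ℝ, (∀ s ∈ Set.Ioi (0:ℝ), s ≠ sf → G s = (deriv F s)^2 / F s) →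
        G sf = 2 * deriv (deriv F) sf → StrictAntiOn G (Set.Ioi 0)) ∧
      ConcaveOn ℝ (Set.Ioi 0) (deriv F)) := by
  have hsfmem : sf ∈ Set.Ioi (0:ℝ) := hsfpos
  -- differentiability of f and its derivatives
  have hfd : ∀ s ∈ Set.Ioi (0:ℝ), DifferentiableAt ℝ f s := fun s hs =>
    (hf.contDiffAt (isOpen_Ioi.mem_nhds hs)).differentiableAt (by simp)
  have hf' : ContDiffOn ℝ (⊤ : ℕ∞) (deriv f) (Set.Ioi 0) :=
    hf.deriv_of_isOpen isOpen_Ioi (by exact_mod_cast le_top)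
  have hf'd : ∀ s ∈ Set.Ioi (0:ℝ), DifferentiableAt ℝ (deriv f) s := fun s hs =>
    (hf'.contDiffAt (isOpen_Ioi.mem_nhds hs)).differentiableAt (by simp)
  have hf'' : ContDiffOn ℝ (⊤ : ℕ∞) (deriv (deriv f)) (Set.Ioi 0) :=
    hf'.deriv_of_isOpen isOpen_Ioi (by exact_mod_cast le_top)
  -- first derivative facts
  have hd1 : ∀ s ∈ Set.Ioi (0:ℝ), deriv F s = s * f s - 1 := fun s hs => (hF s hs).deriv
  have hFd : ∀ s ∈ Set.Ioi (0:ℝ), HasDerivAt F (deriv F s) s := fun s hs => by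
    rw [hd1 s hs]; exact hF s hs
  -- second derivative
  have hg2 : ∀ s ∈ Set.Ioi (0:ℝ), HasDerivAt (deriv F) (f s + s * deriv f s) s := by
    intro s hs
    have h1 : HasDerivAt (fun u => u * f u - 1) (1 * f s + s * deriv f s) s :=
      ((hasDerivAt_id s).mul (hfd s hs).hasDerivAt).sub_const 1
    have heq : deriv F =ᶠ[𝓝 s] (fun u => u * f u - 1) := by
      filter_upwards [isOpen_Ioi.mem_nhds hs] with u hu
      exact hd1 u hu
    have := h1.congr_of_eventuallyEq heq
    simpa using this
  have hd2 : ∀ s ∈ Set.Ioi (0:ℝ), deriv (deriv F) s = f s + s * deriv f s :=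
    fun s hs => (hg2 s hs).deriv
  have hF2d : ∀ s ∈ Set.Ioi (0:ℝ), HasDerivAt (deriv F) (deriv (deriv F) s) s := fun s hs => by
    rw [hd2 s hs]; exact hg2 s hs
  -- third derivative
  have hg3 : ∀ s ∈ Set.Ioi (0:ℝ), HasDerivAt (deriv (deriv F))
      (2 * deriv f s + s * deriv (deriv f) s) s := by
    intro s hs
    have h1 : HasDerivAt (fun u => f u + u * deriv f u)
        (deriv f s + (1 * deriv f s + s * deriv (deriv f) s)) s :=
      (hfd s hs).hasDerivAt.add ((hasDerivAt_id s).mul (hf'd s hs).hasDerivAt)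
    have heq : deriv (deriv F) =ᶠ[𝓝 s] (fun u => f u + u * deriv f u) := by
      filter_upwards [isOpen_Ioi.mem_nhds hs] with u hu
      exact hd2 u hu
    have := h1.congr_of_eventuallyEq heq
    exact this.congr_deriv (by ring)
  -- continuity of third derivative target
  have hTcont : ContinuousOn (fun s => 2 * deriv f s + s * deriv (deriv f) s) (Set.Ioi 0) := by
    exact (continuousOn_const.mul hf'.continuousOn).add
      (continuousOn_id.mul hf''.continuousOn)
  -- sign of deriv F
  have hdFcont : ContinuousOn (deriv F) (Set.Ioi 0) := fun s hs =>
    (hg2 s hs).continuousAt.continuousWithinAt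
  have hFmono1 : StrictMonoOn (deriv F) (Set.Ioi 0) := by
    apply strictMonoOn_of_deriv_pos (convex_Ioi 0) hdFcont
    intro x hx
    rw [interior_Ioi] at hx
    exact hFpp x hx
  have hdFsf : deriv F sf = 0 := by rw [hd1 sf hsfmem, hsf1]; ring
  have hdFneg : ∀ s ∈ Set.Ioo 0 sf, deriv F s < 0 := by
    intro s hs
    have := hFmono1 (by exact hs.1 : s ∈ Set.Ioi 0) hsfmem hs.2
    rwa [hdFsf] at this
  have hdFpos : ∀ s ∈ Set.Ioi sf, 0 < deriv F s := by
    intro s hs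
    have := hFmono1 hsfmem (lt_trans hsfpos hs) hs
    rwa [hdFsf] at this
  -- positivity of F away from sf
  have hFcont : ContinuousOn F (Set.Ioi 0) := fun s hs =>
    (hF s hs).continuousAt.continuousWithinAt
  have hIocsub : Set.Ioc 0 sf ⊆ Set.Ioi (0:ℝ) := fun x hx => hx.1
  have hIcisub : Set.Ici sf ⊆ Set.Ioi (0:ℝ) := fun x hx => lt_of_lt_of_le hsfpos hx
  have hFanti : StrictAntiOn F (Set.Ioc 0 sf) := by
    apply strictAntiOn_of_deriv_neg (convex_Ioc 0 sf) (hFcont.mono hIocsub)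
    intro x hx
    rw [interior_Ioc] at hx
    exact hdFneg x hx
  have hFmono : StrictMonoOn F (Set.Ici sf) := by
    apply strictMonoOn_of_deriv_pos (convex_Ici sf) (hFcont.mono hIcisub)
    intro x hx
    rw [interior_Ici] at hx
    exact hdFpos x hx
  have hFpos : ∀ s ∈ Set.Ioi (0:ℝ), s ≠ sf → 0 < F s := by
    intro s hs hne
    rcases lt_or_gt_of_ne hne with h | h
    · have := hFanti ⟨hs, le_of_lt h⟩ ⟨hsfpos, le_refl sf⟩ h
      rwa [hFsf] at this
    · have := hFmono (self_mem_Ici) (le_of_lt h) h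
      rwa [hFsf] at this
  -- inverse function and derivative of sStar
  have hInj : Set.InjOn F (Set.Ici sf) := hFmono.injOn
  have hA : ∀ y ∈ Set.Ioo 0 sf, Function.invFunOn F (Set.Ici sf) (F y) = sStar y := by
    intro y hy
    obtain ⟨hgt, hFeq⟩ := hsStar y hy
    have hex : ∃ a ∈ Set.Ici sf, F a = F y := ⟨sStar y, le_of_lt hgt, hFeq⟩
    have h1 : F (Function.invFunOn F (Set.Ici sf) (F y)) = F y := Function.invFunOn_eq hex
    have h2 : Function.invFunOn F (Set.Ici sf) (F y) ∈ Set.Ici sf := Function.invFunOn_mem hex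
    exact hInj h2 (le_of_lt hgt) (by rw [h1, hFeq])
  have hinv : ∀ s0 ∈ Set.Ioo 0 sf, HasDerivAt sStar (deriv F s0 / deriv F (sStar s0)) s0 := by
    intro s0 hs0
    obtain ⟨ht0gt, ht0F⟩ := hsStar s0 hs0
    set t0 := sStar s0 with ht0def
    have ht0mem : t0 ∈ Set.Ioi (0:ℝ) := lt_trans hsfpos ht0gt
    have key : ∀ δ : ℝ, 0 < δ → δ ≤ t0 - sf → ∀ y ∈ Set.Ioo (F (t0-δ)) (F (t0+δ)),
        F (Function.invFunOn F (Set.Ici sf) y) = y ∧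
        Function.invFunOn F (Set.Ici sf) y ∈ Set.Ioo (t0-δ) (t0+δ) := by
      intro δ hδ hδ' y hy
      have hsub : Set.Icc (t0-δ) (t0+δ) ⊆ Set.Ici sf := fun x hx => by
        have : sf ≤ t0 - δ := by linarith
        exact le_trans this hx.1
      have hle : t0 - δ ≤ t0 + δ := by linarith
      have hivt : Set.Icc (F (t0-δ)) (F (t0+δ)) ⊆ F '' Set.Icc (t0-δ) (t0+δ) :=
        intermediate_value_Icc hle ((hFcont.mono (fun x hx => hIcisub (hsub hx))).mono (by rfl))
      obtain ⟨x, hx, hFx⟩ := hivt (Set.Ioo_subset_Icc_self hy)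
      have hex : ∃ a ∈ Set.Ici sf, F a = y := ⟨x, hsub hx, hFx⟩
      have h1 : F (Function.invFunOn F (Set.Ici sf) y) = y := Function.invFunOn_eq hex
      have h2 : Function.invFunOn F (Set.Ici sf) y ∈ Set.Ici sf := Function.invFunOn_mem hex
      refine ⟨h1, ?_, ?_⟩
      · have hm : sf ≤ t0 - δ := by linarith
        have := (hFmono.lt_iff_lt (Set.mem_Ici.2 hm) h2).1 (by rw [h1]; exact hy.1)
        exact this
      · have hm : sf ≤ t0 + δ := by linarith
        exact (hFmono.lt_iff_lt h2 (Set.mem_Ici.2 hm)).1 (by rw [h1]; exact hy.2)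
    have hFt0mem : F s0 ∈ Set.Ioo (F (t0 - (t0 - sf))) (F (t0 + (t0 - sf))) := by
      have h1 : F (t0 - (t0 - sf)) < F t0 :=
        hFmono (by simp) (le_of_lt ht0gt) (by linarith)
      have h2 : F t0 < F (t0 + (t0 - sf)) :=
        hFmono (le_of_lt ht0gt) (by simp; linarith) (by linarith)
      rw [← ht0F]
      exact ⟨h1, h2⟩
    have hev : ∀ᶠ y in 𝓝 (F s0), F (Function.invFunOn F (Set.Ici sf) y) = y := by
      filter_upwards [Ioo_mem_nhds hFt0mem.1 hFt0mem.2] with y hy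
      exact (key (t0 - sf) (by linarith) (le_refl _) y hy).1
    have hcont : ContinuousAt (Function.invFunOn F (Set.Ici sf)) (F s0) := by
      have htd : Tendsto (Function.invFunOn F (Set.Ici sf)) (𝓝 (F s0)) (𝓝 t0) := by
        rw [Metric.tendsto_nhds]
        intro ε hε
        set δ := min ε (t0 - sf) with hδdef
        have hδpos : 0 < δ := lt_min hε (by linarith)
        have hδle : δ ≤ t0 - sf := min_le_right _ _
        have hmem : F s0 ∈ Set.Ioo (F (t0 - δ)) (F (t0 + δ)) := by
          constructor
          · rw [← ht0F]
            exact hFmono (by simp; linarith) (le_of_lt ht0gt) (by linarith)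
          · rw [← ht0F]
            exact hFmono (le_of_lt ht0gt) (by simp; linarith) (by linarith)
        filter_upwards [Ioo_mem_nhds hmem.1 hmem.2] with y hy
        have := (key δ hδpos hδle y hy).2
        rw [Real.dist_eq, abs_lt]
        constructor
        · have := this.1; have : t0 - ε ≤ t0 - δ := by simp [hδdef]; linarith [min_le_left ε (t0-sf)]
          have h3 := (key δ hδpos hδle y hy).2.1
          linarith [min_le_left ε (t0 - sf)]
        · have h3 := (key δ hδpos hδle y hy).2.2
          linarith [min_le_left ε (t0 - sf)]
      have heq : Function.invFunOn F (Set.Ici sf) (F s0) = t0 := hA s0 hs0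
      rw [ContinuousAt, heq]
      exact htd
    have hderivt0 : HasDerivAt F (deriv F t0) (Function.invFunOn F (Set.Ici sf) (F s0)) := by
      rw [hA s0 hs0]
      exact hFd t0 ht0mem
    have hne : deriv F t0 ≠ 0 := ne_of_gt (hdFpos t0 ht0gt)
    have hdinv : HasDerivAt (Function.invFunOn F (Set.Ici sf)) (deriv F t0)⁻¹ (F s0) :=
      HasDerivAt.of_local_left_inverse hcont hderivt0 hne hev
    have hcomp : HasDerivAt (Function.invFunOn F (Set.Ici sf) ∘ F)
        ((deriv F t0)⁻¹ * deriv F s0) s0 :=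
      hdinv.comp s0 (hFd s0 (Set.mem_Ioi.2 hs0.1))
    have heq2 : sStar =ᶠ[𝓝 s0] (Function.invFunOn F (Set.Ici sf) ∘ F) := by
      filter_upwards [isOpen_Ioo.mem_nhds hs0] with y hy
      exact (hA y hy).symm
    have := hcomp.congr_of_eventuallyEq heq2
    exact this.congr_deriv (by rw [div_eq_mul_inv, mul_comm])
  -- second derivative of sStar
  have hdstar_eq : ∀ s ∈ Set.Ioo 0 sf, deriv sStar s = deriv F s / deriv F (sStar s) :=
    fun s hs => (hinv s hs).deriv
  have hstar2 : ∀ s ∈ Set.Ioo 0 sf, HasDerivAt (deriv sStar)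
      ((deriv (deriv F) s * (deriv F (sStar s))^2 - deriv (deriv F) (sStar s) * (deriv F s)^2)
        / (deriv F (sStar s))^3) s := by
    intro s hs
    obtain ⟨hgt, hFeq⟩ := hsStar s hs
    have htmem : sStar s ∈ Set.Ioi (0:ℝ) := lt_trans hsfpos hgt
    have hBpos : 0 < deriv F (sStar s) := hdFpos _ hgt
    have hnum : HasDerivAt (deriv F) (deriv (deriv F) s) s := hF2d s (Set.mem_Ioi.2 hs.1)
    have hden : HasDerivAt (fun u => deriv F (sStar u))
        (deriv (deriv F) (sStar s) * (deriv F s / deriv F (sStar s))) s :=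
      (hF2d _ htmem).comp s (hinv s hs)
    have hdiv := hnum.div hden (ne_of_gt hBpos)
    have heq : deriv sStar =ᶠ[𝓝 s] fun u => deriv F u / deriv F (sStar u) := by
      filter_upwards [isOpen_Ioo.mem_nhds hs] with u hu
      exact hdstar_eq u hu
    have h2 := hdiv.congr_of_eventuallyEq heq
    exact h2.congr_deriv (by field_simp)
  -- derivative of F'^2/F away from sf
  have hdFne : ∀ s ∈ Set.Ioi (0:ℝ), s ≠ sf → deriv F s ≠ 0 := by
    intro s hs hne
    have := hFmono1.injOn.ne hs hsfmem hne
    rwa [hdFsf] at this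
  have hG0 : ∀ s ∈ Set.Ioi (0:ℝ), s ≠ sf → HasDerivAt (fun u => (deriv F u)^2 / F u)
      (deriv F s * (2 * deriv (deriv F) s * F s - (deriv F s)^2) / (F s)^2) s := by
    intro s hs hne
    have hFp := hFpos s hs hne
    have hnum : HasDerivAt (fun u => (deriv F u)^2)
        (((2:ℕ):ℝ) * (deriv F s)^(2-1) * deriv (deriv F) s) s := (hF2d s hs).pow 2
    have := hnum.div (hFd s hs) (ne_of_gt hFp)
    exact this.congr_deriv (by push_cast; ring)
  have hmemIoi : ∀ᶠ x in 𝓝[≠] sf, x ∈ Set.Ioi (0:ℝ) ∧ x ≠ sf := by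
    filter_upwards [nhdsWithin_le_nhds (isOpen_Ioi.mem_nhds hsfmem), self_mem_nhdsWithin]
      with x h1 h2
    exact ⟨h1, h2⟩
  have hGlim : Tendsto (fun s => (deriv F s)^2 / F s) (𝓝[≠] sf)
      (𝓝 (2 * deriv (deriv F) sf)) := by
    apply HasDerivAt.lhopital_zero_nhdsNE
      (f' := fun x => ((2:ℕ):ℝ) * (deriv F x)^(2-1) * deriv (deriv F) x) (g' := deriv F)
    · filter_upwards [hmemIoi] with x hx
      exact (hF2d x hx.1).pow 2
    · filter_upwards [hmemIoi] with x hx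
      exact hFd x hx.1
    · filter_upwards [hmemIoi] with x hx
      exact hdFne x hx.1 hx.2
    · have hc : ContinuousAt (fun s => (deriv F s)^2) sf :=
        ((hg2 sf hsfmem).continuousAt).pow 2
      have ht := hc.tendsto.mono_left (nhdsWithin_le_nhds (s := {sf}ᶜ))
      simpa [hdFsf] using ht
    · have ht := (hF sf hsfmem).continuousAt.tendsto.mono_left (nhdsWithin_le_nhds (s := {sf}ᶜ))
      simpa [hFsf] using ht
    · have hc : ContinuousAt (deriv (deriv F)) sf := (hg3 sf hsfmem).continuousAt
      have h2 : Tendsto (fun x => 2 * deriv (deriv F) x) (𝓝[≠] sf)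
          (𝓝 (2 * deriv (deriv F) sf)) :=
        (continuousAt_const.mul hc).tendsto.mono_left (nhdsWithin_le_nhds (s := {sf}ᶜ))
      apply h2.congr'
      filter_upwards [hmemIoi] with x hx
      have hne := hdFne x hx.1 hx.2
      field_simp
      ring
  -- preparation for the G statements
  have hGprep : ∀ G : ℝ → ℝ, (∀ s ∈ Set.Ioi (0:ℝ), s ≠ sf → G s = (deriv F s)^2 / F s) →
      G sf = 2 * deriv (deriv F) sf →
      (ContinuousOn G (Set.Ioc 0 sf) ∧ ContinuousOn G (Set.Ici sf) ∧
       ∀ s ∈ Set.Ioi (0:ℝ), s ≠ sf →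
         HasDerivAt G (deriv F s * (2 * deriv (deriv F) s * F s - (deriv F s)^2) / (F s)^2) s) := by
    intro G hG1 hG2
    have htd : Tendsto G (𝓝[≠] sf) (𝓝 (G sf)) := by
      rw [hG2]
      apply hGlim.congr'
      filter_upwards [hmemIoi] with x hx
      exact (hG1 x hx.1 hx.2).symm
    have hder : ∀ s ∈ Set.Ioi (0:ℝ), s ≠ sf →
        HasDerivAt G (deriv F s * (2 * deriv (deriv F) s * F s - (deriv F s)^2) / (F s)^2) s := by
      intro s hs hne
      have hU : (Set.Ioi 0 ∩ {sf}ᶜ : Set ℝ) ∈ 𝓝 s :=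
        (isOpen_Ioi.inter isOpen_compl_singleton).mem_nhds ⟨hs, hne⟩
      have heq : G =ᶠ[𝓝 s] fun u => (deriv F u)^2 / F u := by
        filter_upwards [hU] with u hu
        exact hG1 u hu.1 hu.2
      exact (hG0 s hs hne).congr_of_eventuallyEq heq
    refine ⟨?_, ?_, hder⟩
    · intro x hx
      rcases eq_or_lt_of_le hx.2 with rfl | hlt
      · rw [← continuousWithinAt_diff_self]
        exact htd.mono_left (nhdsWithin_mono _ (fun y hy => hy.2))
      · exact (hder x hx.1 (ne_of_lt hlt)).continuousAt.continuousWithinAt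
    · intro x hx
      rcases eq_or_lt_of_le (Set.mem_Ici.1 hx) with rfl | hlt
      · rw [← continuousWithinAt_diff_self]
        exact htd.mono_left (nhdsWithin_mono _ (fun y hy => hy.2))
      · exact (hder x (lt_trans hsfpos hlt) (ne_of_gt hlt)).continuousAt.continuousWithinAt
  -- K value relation
  have hKval : ∀ s ∈ Set.Ioi (0:ℝ), s ≠ sf →
      K s * (deriv F s)^2 = deriv (deriv F) s * F s := by
    intro s hs hne
    rw [hK s hs hne]
    exact div_mul_cancel₀ _ (pow_ne_zero 2 (hdFne s hs hne))
  constructor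
  · -- monotone case
    intro hmono
    have hhneg : ∀ s ∈ Set.Ioo 0 sf, 2 * deriv (deriv F) s * F s - (deriv F s)^2 < 0 := by
      intro s hs
      have hsI : s ∈ Set.Ioi (0:ℝ) := hs.1
      have hne : s ≠ sf := ne_of_lt hs.2
      have hlt : K s < 1/2 := by rw [← hKsf]; exact hmono hsI hsfmem hs.2
      have hv := hKval s hsI hne
      have hA2 : 0 < (deriv F s)^2 := pow_two_pos_of_ne_zero (hdFne s hsI hne)
      nlinarith [mul_lt_mul_of_pos_right hlt hA2]
    have hhpos : ∀ s ∈ Set.Ioi sf, 0 < 2 * deriv (deriv F) s * F s - (deriv F s)^2 := by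
      intro s hs
      have hsI : s ∈ Set.Ioi (0:ℝ) := lt_trans hsfpos hs
      have hne : s ≠ sf := ne_of_gt hs
      have hlt : 1/2 < K s := by rw [← hKsf]; exact hmono hsfmem hsI hs
      have hv := hKval s hsI hne
      have hA2 : 0 < (deriv F s)^2 := pow_two_pos_of_ne_zero (hdFne s hsI hne)
      nlinarith [mul_lt_mul_of_pos_right hlt hA2]
    refine ⟨?_, ?_, ?_⟩
    · -- concavity of sStar
      apply AntitoneOn.concaveOn_of_deriv (convex_Ioo 0 sf)
        (fun s hs => (hinv s hs).continuousAt.continuousWithinAt)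
      · rw [interior_Ioo]
        exact fun s hs => (hinv s hs).differentiableAt.differentiableWithinAt
      · rw [interior_Ioo]
        apply antitoneOn_of_deriv_nonpos (convex_Ioo 0 sf)
          (fun s hs => (hstar2 s hs).continuousAt.continuousWithinAt)
        · rw [interior_Ioo]
          exact fun s hs => (hstar2 s hs).differentiableAt.differentiableWithinAt
        · rw [interior_Ioo]
          intro s hs
          rw [(hstar2 s hs).deriv]
          obtain ⟨hgt, hFeq⟩ := hsStar s hs
          have hsI : s ∈ Set.Ioi (0:ℝ) := hs.1
          have htI : sStar s ∈ Set.Ioi (0:ℝ) := lt_trans hsfpos hgt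
          have hKlt : K s < K (sStar s) := hmono hsI htI (lt_trans hs.2 hgt)
          have hv1 := hKval s hsI (ne_of_lt hs.2)
          have hv2 := hKval (sStar s) htI (ne_of_gt hgt)
          have hFp := hFpos s hsI (ne_of_lt hs.2)
          have hA2 : 0 < (deriv F s)^2 :=
            pow_two_pos_of_ne_zero (hdFne s hsI (ne_of_lt hs.2))
          have hB : 0 < deriv F (sStar s) := hdFpos _ hgt
          have hB2 : 0 < (deriv F (sStar s))^2 := by positivity
          rw [hFeq] at hv2
          rw [div_nonpos_iff]
          right
          constructor
          · have e1 : deriv (deriv F) s * F s * (deriv F (sStar s))^2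
                = K s * (deriv F s)^2 * (deriv F (sStar s))^2 := by rw [← hv1]
            have e2 : deriv (deriv F) (sStar s) * F s * (deriv F s)^2
                = K (sStar s) * (deriv F (sStar s))^2 * (deriv F s)^2 := by rw [← hv2]
            nlinarith [e1, e2, mul_lt_mul_of_pos_right hKlt (mul_pos hA2 hB2), hFp]
          · exact le_of_lt (pow_pos hB 3)
    · -- (F')^2/F increasing
      intro G hG1 hG2
      obtain ⟨hc1, hc2, hder⟩ := hGprep G hG1 hG2
      have hm1 : StrictMonoOn G (Set.Ioc 0 sf) := by
        apply strictMonoOn_of_deriv_pos (convex_Ioc 0 sf) hc1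
        intro x hx
        rw [interior_Ioc] at hx
        rw [(hder x hx.1 (ne_of_lt hx.2)).deriv]
        have hFp := hFpos x hx.1 (ne_of_lt hx.2)
        exact div_pos (mul_pos_of_neg_of_neg (hdFneg x hx) (hhneg x hx)) (by positivity)
      have hm2 : StrictMonoOn G (Set.Ici sf) := by
        apply strictMonoOn_of_deriv_pos (convex_Ici sf) hc2
        intro x hx
        rw [interior_Ici] at hx
        rw [(hder x (lt_trans hsfpos hx) (ne_of_gt hx)).deriv]
        have hFp := hFpos x (lt_trans hsfpos hx) (ne_of_gt hx)
        exact div_pos (mul_pos (hdFpos x hx) (hhpos x hx)) (by positivity)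
      intro x hx y hy hxy
      rcases le_or_gt y sf with h | h
      · exact hm1 ⟨hx, le_of_lt (lt_of_lt_of_le hxy h)⟩ ⟨hy, h⟩ hxy
      · rcases lt_or_ge x sf with h2 | h2
        · exact lt_trans (hm1 ⟨hx, le_of_lt h2⟩ ⟨hsfpos, le_refl sf⟩ h2)
            (hm2 self_mem_Ici (le_of_lt h) h)
        · exact hm2 h2 (le_of_lt (lt_of_le_of_lt h2 hxy)) hxy
    · -- convexity of deriv F
      have hT' : ∀ s ∈ Set.Ioi (0:ℝ), s ≠ sf →
          0 ≤ 2 * deriv f s + s * deriv (deriv f) s := by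
        intro s hs hne
        have hAne := hdFne s hs hne
        have hnum : HasDerivAt (fun u => deriv (deriv F) u * F u)
            ((2 * deriv f s + s * deriv (deriv f) s) * F s
              + deriv (deriv F) s * deriv F s) s := (hg3 s hs).mul (hFd s hs)
        have hden : HasDerivAt (fun u => (deriv F u)^2)
            (((2:ℕ):ℝ) * (deriv F s)^(2-1) * deriv (deriv F) s) s := (hF2d s hs).pow 2
        have hφ := hnum.div hden (pow_ne_zero 2 hAne)
        have heq : K =ᶠ[𝓝 s] fun u => deriv (deriv F) u * F u / (deriv F u)^2 := by
          filter_upwards [(isOpen_Ioi.inter isOpen_compl_singleton).mem_nhds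
            (⟨hs, hne⟩ : s ∈ Set.Ioi 0 ∩ {sf}ᶜ)] with u hu
          exact hK u hu.1 hu.2
        have hKd := hφ.congr_of_eventuallyEq heq
        have hc := aux_deriv_nonneg hKd (isOpen_Ioi.mem_nhds hs)
          (fun a ham b hbm hab => (hmono ham hbm hab).le)
        have hq : (0:ℝ) < ((deriv F s)^2)^2 := by positivity
        have hnum0 := mul_nonneg hc (le_of_lt hq)
        rw [div_mul_cancel₀ _ (ne_of_gt hq)] at hnum0
        push_cast at hnum0
        have hFp := hFpos s hs hne
        have hPp := hFpp s hs
        have k1 : deriv F s * deriv (deriv F) s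
            * ((deriv F s)^2 - 2 * deriv (deriv F) s * F s) < 0 := by
          rcases lt_or_gt_of_ne hne with hlt | hgt
          · exact mul_neg_of_neg_of_pos
              (mul_neg_of_neg_of_pos (hdFneg s ⟨hs, hlt⟩) hPp)
              (by nlinarith [hhneg s ⟨hs, hlt⟩])
          · exact mul_neg_of_pos_of_neg (mul_pos (hdFpos s hgt) hPp)
              (by nlinarith [hhpos s hgt])
        nlinarith [hnum0, k1, mul_pos hFp (pow_two_pos_of_ne_zero hAne)]
      have hT : ∀ s ∈ Set.Ioi (0:ℝ), 0 ≤ 2 * deriv f s + s * deriv (deriv f) s := by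
        intro s hs
        rcases eq_or_ne s sf with rfl | hne
        · have hct : ContinuousAt (fun x => 2 * deriv f x + x * deriv (deriv f) x) s :=
            hTcont.continuousAt (isOpen_Ioi.mem_nhds hs)
          refine ge_of_tendsto (hct.tendsto.mono_left (nhdsWithin_le_nhds (s := {s}ᶜ))) ?_
          filter_upwards [hmemIoi] with x hx
          exact hT' x hx.1 hx.2
        · exact hT' s hs hne
      apply MonotoneOn.convexOn_of_deriv (convex_Ioi 0) hdFcont
      · rw [interior_Ioi]
        exact fun s hs => (hF2d s hs).differentiableAt.differentiableWithinAt
      · rw [interior_Ioi]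
        apply monotoneOn_of_deriv_nonneg (convex_Ioi 0)
          (fun s hs => (hg3 s hs).continuousAt.continuousWithinAt)
        · rw [interior_Ioi]
          exact fun s hs => (hg3 s hs).differentiableAt.differentiableWithinAt
        · rw [interior_Ioi]
          intro x hx
          rw [(hg3 x hx).deriv]
          exact hT x hx
  · -- antitone case
    intro hanti
    have hhpos : ∀ s ∈ Set.Ioo 0 sf, 0 < 2 * deriv (deriv F) s * F s - (deriv F s)^2 := by
      intro s hs
      have hsI : s ∈ Set.Ioi (0:ℝ) := hs.1
      have hne : s ≠ sf := ne_of_lt hs.2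
      have hlt : 1/2 < K s := by rw [← hKsf]; exact hanti hsI hsfmem hs.2
      have hv := hKval s hsI hne
      have hA2 : 0 < (deriv F s)^2 := pow_two_pos_of_ne_zero (hdFne s hsI hne)
      nlinarith [mul_lt_mul_of_pos_right hlt hA2]
    have hhneg : ∀ s ∈ Set.Ioi sf, 2 * deriv (deriv F) s * F s - (deriv F s)^2 < 0 := by
      intro s hs
      have hsI : s ∈ Set.Ioi (0:ℝ) := lt_trans hsfpos hs
      have hne : s ≠ sf := ne_of_gt hs
      have hlt : K s < 1/2 := by rw [← hKsf]; exact hanti hsfmem hsI hs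
      have hv := hKval s hsI hne
      have hA2 : 0 < (deriv F s)^2 := pow_two_pos_of_ne_zero (hdFne s hsI hne)
      nlinarith [mul_lt_mul_of_pos_right hlt hA2]
    refine ⟨?_, ?_, ?_⟩
    · -- convexity of sStar
      apply MonotoneOn.convexOn_of_deriv (convex_Ioo 0 sf)
        (fun s hs => (hinv s hs).continuousAt.continuousWithinAt)
      · rw [interior_Ioo]
        exact fun s hs => (hinv s hs).differentiableAt.differentiableWithinAt
      · rw [interior_Ioo]
        apply monotoneOn_of_deriv_nonneg (convex_Ioo 0 sf)
          (fun s hs => (hstar2 s hs).continuousAt.continuousWithinAt)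
        · rw [interior_Ioo]
          exact fun s hs => (hstar2 s hs).differentiableAt.differentiableWithinAt
        · rw [interior_Ioo]
          intro s hs
          rw [(hstar2 s hs).deriv]
          obtain ⟨hgt, hFeq⟩ := hsStar s hs
          have hsI : s ∈ Set.Ioi (0:ℝ) := hs.1
          have htI : sStar s ∈ Set.Ioi (0:ℝ) := lt_trans hsfpos hgt
          have hKgt : K (sStar s) < K s := hanti hsI htI (lt_trans hs.2 hgt)
          have hv1 := hKval s hsI (ne_of_lt hs.2)
          have hv2 := hKval (sStar s) htI (ne_of_gt hgt)
          have hFp := hFpos s hsI (ne_of_lt hs.2)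
          have hA2 : 0 < (deriv F s)^2 :=
            pow_two_pos_of_ne_zero (hdFne s hsI (ne_of_lt hs.2))
          have hB : 0 < deriv F (sStar s) := hdFpos _ hgt
          have hB2 : 0 < (deriv F (sStar s))^2 := by positivity
          rw [hFeq] at hv2
          apply div_nonneg _ (le_of_lt (pow_pos hB 3))
          have e1 : deriv (deriv F) s * F s * (deriv F (sStar s))^2
              = K s * (deriv F s)^2 * (deriv F (sStar s))^2 := by rw [← hv1]
          have e2 : deriv (deriv F) (sStar s) * F s * (deriv F s)^2
              = K (sStar s) * (deriv F (sStar s))^2 * (deriv F s)^2 := by rw [← hv2]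
          nlinarith [e1, e2, mul_lt_mul_of_pos_right hKgt (mul_pos hA2 hB2), hFp]
    · -- (F')^2/F decreasing
      intro G hG1 hG2
      obtain ⟨hc1, hc2, hder⟩ := hGprep G hG1 hG2
      have hm1 : StrictAntiOn G (Set.Ioc 0 sf) := by
        apply strictAntiOn_of_deriv_neg (convex_Ioc 0 sf) hc1
        intro x hx
        rw [interior_Ioc] at hx
        rw [(hder x hx.1 (ne_of_lt hx.2)).deriv]
        have hFp := hFpos x hx.1 (ne_of_lt hx.2)
        exact div_neg_of_neg_of_pos
          (mul_neg_of_neg_of_pos (hdFneg x hx) (hhpos x hx)) (by positivity)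
      have hm2 : StrictAntiOn G (Set.Ici sf) := by
        apply strictAntiOn_of_deriv_neg (convex_Ici sf) hc2
        intro x hx
        rw [interior_Ici] at hx
        rw [(hder x (lt_trans hsfpos hx) (ne_of_gt hx)).deriv]
        have hFp := hFpos x (lt_trans hsfpos hx) (ne_of_gt hx)
        exact div_neg_of_neg_of_pos
          (mul_neg_of_pos_of_neg (hdFpos x hx) (hhneg x hx)) (by positivity)
      intro x hx y hy hxy
      rcases le_or_gt y sf with h | h
      · exact hm1 ⟨hx, le_of_lt (lt_of_lt_of_le hxy h)⟩ ⟨hy, h⟩ hxy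
      · rcases lt_or_ge x sf with h2 | h2
        · exact lt_trans (hm2 self_mem_Ici (le_of_lt h) h)
            (hm1 ⟨hx, le_of_lt h2⟩ ⟨hsfpos, le_refl sf⟩ h2)
        · exact hm2 h2 (le_of_lt (lt_of_le_of_lt h2 hxy)) hxy
    · -- concavity of deriv F
      have hT' : ∀ s ∈ Set.Ioi (0:ℝ), s ≠ sf →
          2 * deriv f s + s * deriv (deriv f) s ≤ 0 := by
        intro s hs hne
        have hAne := hdFne s hs hne
        have hnum : HasDerivAt (fun u => deriv (deriv F) u * F u)
            ((2 * deriv f s + s * deriv (deriv f) s) * F s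
              + deriv (deriv F) s * deriv F s) s := (hg3 s hs).mul (hFd s hs)
        have hden : HasDerivAt (fun u => (deriv F u)^2)
            (((2:ℕ):ℝ) * (deriv F s)^(2-1) * deriv (deriv F) s) s := (hF2d s hs).pow 2
        have hφ := hnum.div hden (pow_ne_zero 2 hAne)
        have heq : K =ᶠ[𝓝 s] fun u => deriv (deriv F) u * F u / (deriv F u)^2 := by
          filter_upwards [(isOpen_Ioi.inter isOpen_compl_singleton).mem_nhds
            (⟨hs, hne⟩ : s ∈ Set.Ioi 0 ∩ {sf}ᶜ)] with u hu
          exact hK u hu.1 hu.2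
        have hKd := hφ.congr_of_eventuallyEq heq
        have hc := aux_deriv_nonpos hKd (isOpen_Ioi.mem_nhds hs)
          (fun a ham b hbm hab => (hanti ham hbm hab).le)
        have hq : (0:ℝ) < ((deriv F s)^2)^2 := by positivity
        have hnum0 := mul_le_mul_of_nonneg_right hc (le_of_lt hq)
        rw [div_mul_cancel₀ _ (ne_of_gt hq), zero_mul] at hnum0
        push_cast at hnum0
        have hFp := hFpos s hs hne
        have hPp := hFpp s hs
        have k1 : 0 < deriv F s * deriv (deriv F) s
            * ((deriv F s)^2 - 2 * deriv (deriv F) s * F s) := by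
          rcases lt_or_gt_of_ne hne with hlt | hgt
          · exact mul_pos_of_neg_of_neg
              (mul_neg_of_neg_of_pos (hdFneg s ⟨hs, hlt⟩) hPp)
              (by nlinarith [hhpos s ⟨hs, hlt⟩])
          · exact mul_pos (mul_pos (hdFpos s hgt) hPp)
              (by nlinarith [hhneg s hgt])
        nlinarith [hnum0, k1, mul_pos hFp (pow_two_pos_of_ne_zero hAne)]
      have hT : ∀ s ∈ Set.Ioi (0:ℝ), 2 * deriv f s + s * deriv (deriv f) s ≤ 0 := by
        intro s hs
        rcases eq_or_ne s sf with rfl | hne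
        · have hct : ContinuousAt (fun x => 2 * deriv f x + x * deriv (deriv f) x) s :=
            hTcont.continuousAt (isOpen_Ioi.mem_nhds hs)
          refine le_of_tendsto (hct.tendsto.mono_left (nhdsWithin_le_nhds (s := {s}ᶜ))) ?_
          filter_upwards [hmemIoi] with x hx
          exact hT' x hx.1 hx.2
        · exact hT' s hs hne
      apply AntitoneOn.concaveOn_of_deriv (convex_Ioi 0) hdFcont
      · rw [interior_Ioi]
        exact fun s hs => (hF2d s hs).differentiableAt.differentiableWithinAt
      · rw [interior_Ioi]
        apply antitoneOn_of_deriv_nonpos (convex_Ioi 0)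
          (fun s hs => (hg3 s hs).continuousAt.continuousWithinAt)
        · rw [interior_Ioi]
          exact fun s hs => (hg3 s hs).differentiableAt.differentiableWithinAt
        · rw [interior_Ioi]
          intro x hx
          rw [(hg3 x hx).deriv]
          exact hT x hx
end

section
/- For all real numbers a > 0 and b > 0: a·min{(b+1)^{1/b}/2, 1} ≤ (((a+1)^{b+1} − 1)/a)^{1/b} − (b+1)^{1/b} ≤ a·max{(b+1)^{1/b}/2, 1}. Equivalently, for 0 < b ≤ 1 one has a ≤ (((a+1)^{b+1} − 1)/a)^{1/b} − (b+1)^{1/b} ≤ a·(b+1)^{1/b}/2, while for b ≥ 1 both of these inequalities are reversed. -/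
open Real

/-- Two-term Hölder superadditivity. -/
private lemma holder2 {θ x1 x2 z1 z2 : ℝ} (h0 : 0 ≤ θ) (h1 : θ ≤ 1)
    (hx1 : 0 < x1) (hx2 : 0 < x2) (hz1 : 0 < z1) (hz2 : 0 < z2) :
    x1 ^ θ * z1 ^ (1-θ) + x2 ^ θ * z2 ^ (1-θ) ≤ (x1+x2) ^ θ * (z1+z2) ^ (1-θ) := by
  have hX : 0 < x1 + x2 := by linarith
  have hZ : 0 < z1 + z2 := by linarith
  have h1' : 0 ≤ 1 - θ := by linarith
  have key : ∀ x z : ℝ, 0 < x → 0 < z →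
      x ^ θ * z ^ (1-θ)
        ≤ (θ * (x/(x1+x2)) + (1-θ) * (z/(z1+z2))) * ((x1+x2)^θ * (z1+z2)^(1-θ)) := by
    intro x z hx hz
    have h := Real.geom_mean_le_arith_mean2_weighted h0 h1'
      (div_nonneg hx.le hX.le) (div_nonneg hz.le hZ.le) (by ring)
    have e : (x/(x1+x2))^θ * (z/(z1+z2))^(1-θ)
        = (x^θ * z^(1-θ)) / ((x1+x2)^θ * (z1+z2)^(1-θ)) := by
      rw [Real.div_rpow hx.le hX.le, Real.div_rpow hz.le hZ.le]
      ring
    rw [e, div_le_iff₀ (by positivity)] at h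
    linarith
  have k1 := key x1 z1 hx1 hz1
  have k2 := key x2 z2 hx2 hz2
  have hsum : (θ * (x1/(x1+x2)) + (1-θ) * (z1/(z1+z2)))
      + (θ * (x2/(x1+x2)) + (1-θ) * (z2/(z1+z2))) = 1 := by
    field_simp
    ring
  calc x1 ^ θ * z1 ^ (1-θ) + x2 ^ θ * z2 ^ (1-θ)
      ≤ (θ * (x1/(x1+x2)) + (1-θ) * (z1/(z1+z2))) * ((x1+x2)^θ * (z1+z2)^(1-θ))
        + (θ * (x2/(x1+x2)) + (1-θ) * (z2/(z1+z2))) * ((x1+x2)^θ * (z1+z2)^(1-θ)) :=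
        add_le_add k1 k2
    _ = ((θ * (x1/(x1+x2)) + (1-θ) * (z1/(z1+z2)))
        + (θ * (x2/(x1+x2)) + (1-θ) * (z2/(z1+z2)))) * ((x1+x2)^θ * (z1+z2)^(1-θ)) := by ring
    _ = (x1+x2)^θ * (z1+z2)^(1-θ) := by rw [hsum, one_mul]

private lemma hasDerivAt_K (b c l : ℝ) (hc : 0 < c) (hl : 0 ≤ l) {x : ℝ} (hx : 0 ≤ x) :
    HasDerivAt (fun a : ℝ => (a+1)^(b+1) - 1 - a*(c + l*a)^b)
      ((b+1)*(x+1)^b - ((c+l*x)^b + x*(b*(c+l*x)^(b-1)*l))) x := by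
  have hx1 : (0:ℝ) < x + 1 := by linarith
  have hclx : (0:ℝ) < c + l*x := by positivity
  have h1 : HasDerivAt (fun a : ℝ => (a+1)^(b+1)) ((b+1)*(x+1)^b) x := by
    have h := (Real.hasDerivAt_rpow_const (p := b+1) (x := x+1)
      (Or.inl hx1.ne')).comp x ((hasDerivAt_id x).add_const 1)
    simpa [Function.comp_def, add_sub_cancel_right] using h
  have h2 : HasDerivAt (fun a : ℝ => c + l*a) l x := by
    simpa using ((hasDerivAt_id x).const_mul l).const_add c
  have h3 : HasDerivAt (fun a : ℝ => (c+l*a)^b) (b*(c+l*x)^(b-1)*l) x := by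
    have h := (Real.hasDerivAt_rpow_const (p := b) (x := c+l*x) (Or.inl hclx.ne')).comp x h2
    exact h
  have h4 : HasDerivAt (fun a : ℝ => a*(c+l*a)^b)
      (1*(c+l*x)^b + x*(b*(c+l*x)^(b-1)*l)) x := (hasDerivAt_id x).mul h3
  have h5 := (h1.sub_const 1).sub h4
  rw [show (b+1)*(x+1)^b - ((c+l*x)^b + x*(b*(c+l*x)^(b-1)*l))
      = (b+1)*(x+1)^b - (1*(c+l*x)^b + x*(b*(c+l*x)^(b-1)*l)) by ring]
  exact h5

private lemma K_nonneg (b c l : ℝ) (hc : 0 < c) (hl : 0 ≤ l)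
    (hd : ∀ x : ℝ, 0 < x → (c+l*x)^b + x*(b*(c+l*x)^(b-1)*l) ≤ (b+1)*(x+1)^b) :
    ∀ a : ℝ, 0 ≤ a → a*(c+l*a)^b ≤ (a+1)^(b+1) - 1 := by
  intro a ha
  set K : ℝ → ℝ := fun a => (a+1)^(b+1) - 1 - a*(c + l*a)^b with hK
  have hmono : MonotoneOn K (Set.Ici 0) := by
    apply monotoneOn_of_deriv_nonneg (convex_Ici 0)
    · intro x hx
      exact (hasDerivAt_K b c l hc hl hx).differentiableAt.continuousAt.continuousWithinAt
    · intro x hx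
      rw [interior_Ici] at hx
      exact ((hasDerivAt_K b c l hc hl (le_of_lt hx)).differentiableAt).differentiableWithinAt
    · intro x hx
      rw [interior_Ici] at hx
      rw [(hasDerivAt_K b c l hc hl (le_of_lt hx)).deriv]
      have := hd x hx
      linarith
  have h0 : K 0 = 0 := by simp [hK]
  have := hmono (Set.self_mem_Ici) (Set.mem_Ici.mpr ha) ha
  rw [h0] at this
  simpa [hK] using this

private lemma K_nonpos (b c l : ℝ) (hc : 0 < c) (hl : 0 ≤ l)
    (hd : ∀ x : ℝ, 0 < x → (b+1)*(x+1)^b ≤ (c+l*x)^b + x*(b*(c+l*x)^(b-1)*l)) :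
    ∀ a : ℝ, 0 ≤ a → (a+1)^(b+1) - 1 ≤ a*(c+l*a)^b := by
  intro a ha
  set K : ℝ → ℝ := fun a => (a+1)^(b+1) - 1 - a*(c + l*a)^b with hK
  have hmono : AntitoneOn K (Set.Ici 0) := by
    apply antitoneOn_of_deriv_nonpos (convex_Ici 0)
    · intro x hx
      exact (hasDerivAt_K b c l hc hl hx).differentiableAt.continuousAt.continuousWithinAt
    · intro x hx
      rw [interior_Ici] at hx
      exact ((hasDerivAt_K b c l hc hl (le_of_lt hx)).differentiableAt).differentiableWithinAt
    · intro x hx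
      rw [interior_Ici] at hx
      rw [(hasDerivAt_K b c l hc hl (le_of_lt hx)).deriv]
      have := hd x hx
      linarith
  have h0 : K 0 = 0 := by simp [hK]
  have := hmono (Set.self_mem_Ici) (Set.mem_Ici.mpr ha) ha
  rw [h0] at this
  simpa [hK] using this

private lemma sideB (b c : ℝ) (hb : 0 < b) (hble : b ≤ 1) (hc : 0 < c) (hcb : c ^ b = b+1)
    (x : ℝ) (hx : 0 < x) :
    (c+1*x)^b + x*(b*(c+1*x)^(b-1)*1) ≤ (b+1)*(x+1)^b := by
  have hcx : (0:ℝ) < c + x := by linarith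
  have H := holder2 (θ := b) hb.le hble hc (mul_pos hc hx) hc hx
  have e1 : c^b*c^(1-b) = c := by
    rw [← Real.rpow_add hc, show b+(1-b) = 1 by ring, Real.rpow_one]
  have e2 : (c*x)^b*x^(1-b) = (b+1)*x := by
    rw [Real.mul_rpow hc.le hx.le, hcb, mul_assoc, ← Real.rpow_add hx,
      show b+(1-b) = 1 by ring, Real.rpow_one]
  rw [e1, e2] at H
  -- H : c + (b+1)*x ≤ (c+c*x)^b * (c+x)^(1-b)
  have hinv : (c+x)^(1-b)*(c+x)^(b-1) = 1 := by
    rw [← Real.rpow_add hcx, show (1-b)+(b-1) = 0 by ring, Real.rpow_zero]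
  have hbb : (c+x)^b = (c+x)^(b-1)*(c+x) := by
    rw [← Real.rpow_add_one hcx.ne' (b-1), show b-1+1 = b by ring]
  have key : (c+x)^(b-1)*(c+(b+1)*x) ≤ (c+c*x)^b := by
    calc (c+x)^(b-1)*(c+(b+1)*x)
        ≤ (c+x)^(b-1)*((c+c*x)^b*(c+x)^(1-b)) :=
          mul_le_mul_of_nonneg_left H (Real.rpow_nonneg hcx.le _)
      _ = (c+c*x)^b * ((c+x)^(1-b)*(c+x)^(b-1)) := by ring
      _ = (c+c*x)^b := by rw [hinv, mul_one]
  have eR : (b+1)*(x+1)^b = (c+c*x)^b := by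
    rw [← hcb, ← Real.mul_rpow hc.le (by positivity : (0:ℝ) ≤ x+1)]
    ring_nf
  rw [eR]
  simp only [one_mul, mul_one]
  calc (c+x)^b + x*(b*(c+x)^(b-1))
      = (c+x)^(b-1)*(c+(b+1)*x) := by rw [hbb]; ring
    _ ≤ (c+c*x)^b := key

private lemma sideA (b c : ℝ) (hb1 : 1 ≤ b) (hc : 0 < c) (hcb : c ^ b = b+1)
    (x : ℝ) (hx : 0 < x) :
    (b+1)*(x+1)^b ≤ (c+1*x)^b + x*(b*(c+1*x)^(b-1)*1) := by
  have hb : (0:ℝ) < b := by linarith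
  have hcx : (0:ℝ) < c + x := by linarith
  have hb1' : (0:ℝ) < b + 1 := by linarith
  have hθ0 : 0 ≤ (b-1)/b := div_nonneg (by linarith) hb.le
  have hθ1 : (b-1)/b ≤ 1 := by rw [div_le_one hb]; linarith
  have H := holder2 (θ := (b-1)/b) hθ0 hθ1 hc hx hc (mul_pos hb1' hx)
  have eθ : 1 - (b-1)/b = 1/b := by field_simp; ring
  rw [eθ] at H
  have hcc : (b+1)^(1/b) = c := by
    rw [← hcb, ← Real.rpow_mul hc.le, mul_one_div, div_self hb.ne', Real.rpow_one]
  have e1 : c^((b-1)/b)*c^(1/b) = c := by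
    rw [← Real.rpow_add hc, show (b-1)/b + 1/b = 1 by field_simp; ring, Real.rpow_one]
  have e2 : x^((b-1)/b)*((b+1)*x)^(1/b) = c*x := by
    rw [Real.mul_rpow hb1'.le hx.le, hcc, show x^((b-1)/b)*(c*x^(1/b)) = c*(x^((b-1)/b)*x^(1/b)) by ring,
      ← Real.rpow_add hx, show (b-1)/b + 1/b = 1 by field_simp; ring, Real.rpow_one]
  rw [e1, e2] at H
  -- H : c + c*x ≤ (c+x)^((b-1)/b) * (c+(b+1)*x)^(1/b)
  have H2 := Real.rpow_le_rpow (by positivity) H hb.le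
  have e3 : ((c+x)^((b-1)/b) * (c+(b+1)*x)^(1/b))^b = (c+x)^(b-1)*(c+(b+1)*x) := by
    rw [Real.mul_rpow (Real.rpow_nonneg hcx.le _) (Real.rpow_nonneg (by positivity) _),
      ← Real.rpow_mul hcx.le, ← Real.rpow_mul (by positivity : (0:ℝ) ≤ c+(b+1)*x),
      show (b-1)/b*b = b-1 by field_simp, show 1/b*b = 1 by field_simp, Real.rpow_one]
  rw [e3] at H2
  have eL : (b+1)*(x+1)^b = (c+c*x)^b := by
    rw [← hcb, ← Real.mul_rpow hc.le (by positivity : (0:ℝ) ≤ x+1)]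
    ring_nf
  have hbb : (c+x)^b = (c+x)^(b-1)*(c+x) := by
    rw [← Real.rpow_add_one hcx.ne' (b-1), show b-1+1 = b by ring]
  rw [eL]
  simp only [one_mul, mul_one]
  calc (c+c*x)^b ≤ (c+x)^(b-1)*(c+(b+1)*x) := H2
    _ = (c+x)^b + x*(b*(c+x)^(b-1)) := by rw [hbb]; ring




-- core Bernoulli comparison: A = u^(b-1)*(u+b*(x/2)) vs (1+x)^b, u = 1+x/2
private lemma bernC (b x : ℝ) (hb1 : 1 ≤ b) (hx : 0 < x) :
    (1+x/2)^(b-1)*((1+x/2)+b*(x/2)) ≤ (1+x)^b := by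
  set u : ℝ := 1 + x/2 with hu
  have hu0 : (0:ℝ) < u := by rw [hu]; linarith
  set s : ℝ := (x/2)/u with hs
  have hs0 : (0:ℝ) ≤ s := by positivity
  have bern := one_add_mul_self_le_rpow_one_add (by linarith : (-1:ℝ) ≤ s) hb1
  have e1 : u*(1+s) = 1+x := by
    rw [hs]; field_simp; ring
  have e2 : u*s = x/2 := by rw [hs]; field_simp
  have hbb : u^b = u^(b-1)*u := by
    rw [← Real.rpow_add_one hu0.ne' (b-1), show b-1+1 = b by ring]
  have h2 : u^b*(1+b*s) ≤ u^b*(1+s)^b :=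
    mul_le_mul_of_nonneg_left bern (Real.rpow_nonneg hu0.le b)
  have h3 : u^b*(1+s)^b = (1+x)^b := by
    rw [← Real.mul_rpow hu0.le (by linarith : (0:ℝ) ≤ 1+s), e1]
  have h4 : u^(b-1)*(u+b*(x/2)) = u^b*(1+b*s) := by
    rw [hbb, ← e2]; ring
  rw [h4]
  rw [h3] at h2
  exact h2

private lemma bernD (b x : ℝ) (hb0 : 0 ≤ b) (hb1 : b ≤ 1) (hx : 0 < x) :
    (1+x)^b ≤ (1+x/2)^(b-1)*((1+x/2)+b*(x/2)) := by
  set u : ℝ := 1 + x/2 with hu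
  have hu0 : (0:ℝ) < u := by rw [hu]; linarith
  set s : ℝ := (x/2)/u with hs
  have hs0 : (0:ℝ) ≤ s := by positivity
  have bern := rpow_one_add_le_one_add_mul_self (by linarith : (-1:ℝ) ≤ s) hb0 hb1
  have e1 : u*(1+s) = 1+x := by
    rw [hs]; field_simp; ring
  have e2 : u*s = x/2 := by rw [hs]; field_simp
  have hbb : u^b = u^(b-1)*u := by
    rw [← Real.rpow_add_one hu0.ne' (b-1), show b-1+1 = b by ring]
  have h2 : u^b*(1+s)^b ≤ u^b*(1+b*s) :=
    mul_le_mul_of_nonneg_left bern (Real.rpow_nonneg hu0.le b)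
  have h3 : u^b*(1+s)^b = (1+x)^b := by
    rw [← Real.mul_rpow hu0.le (by linarith : (0:ℝ) ≤ 1+s), e1]
  have h4 : u^(b-1)*(u+b*(x/2)) = u^b*(1+b*s) := by
    rw [hbb, ← e2]; ring
  rw [h4, ← h3]
  exact h2

-- scale by c: side C (b ≥ 1): hd for K_nonneg with l = c/2
private lemma sideC (b c : ℝ) (hb1 : 1 ≤ b) (hc : 0 < c) (hcb : c ^ b = b+1)
    (x : ℝ) (hx : 0 < x) :
    (c+(c/2)*x)^b + x*(b*(c+(c/2)*x)^(b-1)*(c/2)) ≤ (b+1)*(x+1)^b := by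
  have hu0 : (0:ℝ) < 1 + x/2 := by linarith
  have ecu : c+(c/2)*x = c*(1+x/2) := by ring
  have e1 : (c+(c/2)*x)^b = c^b*(1+x/2)^b := by
    rw [ecu, Real.mul_rpow hc.le hu0.le]
  have e2 : (c+(c/2)*x)^(b-1) = c^(b-1)*(1+x/2)^(b-1) := by
    rw [ecu, Real.mul_rpow hc.le hu0.le]
  have e3 : c^(b-1)*c = c^b := by
    rw [← Real.rpow_add_one hc.ne' (b-1), show b-1+1 = b by ring]
  have hbb : (1+x/2:ℝ)^b = (1+x/2)^(b-1)*(1+x/2) := by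
    rw [← Real.rpow_add_one hu0.ne' (b-1), show b-1+1 = b by ring]
  have key := bernC b x hb1 hx
  have eR : (b+1)*(x+1)^b = c^b*(1+x)^b := by rw [hcb]; ring_nf
  rw [e1, e2, eR]
  calc c^b*(1+x/2)^b + x*(b*(c^(b-1)*(1+x/2)^(b-1))*(c/2))
      = c^b * ((1+x/2)^(b-1)*((1+x/2)+b*(x/2))) := by
        rw [hbb, ← e3]; ring
    _ ≤ c^b*(1+x)^b :=
        mul_le_mul_of_nonneg_left key (Real.rpow_nonneg hc.le b)

private lemma sideD (b c : ℝ) (hb0 : 0 < b) (hb1 : b ≤ 1) (hc : 0 < c) (hcb : c ^ b = b+1)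
    (x : ℝ) (hx : 0 < x) :
    (b+1)*(x+1)^b ≤ (c+(c/2)*x)^b + x*(b*(c+(c/2)*x)^(b-1)*(c/2)) := by
  have hu0 : (0:ℝ) < 1 + x/2 := by linarith
  have ecu : c+(c/2)*x = c*(1+x/2) := by ring
  have e1 : (c+(c/2)*x)^b = c^b*(1+x/2)^b := by
    rw [ecu, Real.mul_rpow hc.le hu0.le]
  have e2 : (c+(c/2)*x)^(b-1) = c^(b-1)*(1+x/2)^(b-1) := by
    rw [ecu, Real.mul_rpow hc.le hu0.le]
  have e3 : c^(b-1)*c = c^b := by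
    rw [← Real.rpow_add_one hc.ne' (b-1), show b-1+1 = b by ring]
  have hbb : (1+x/2:ℝ)^b = (1+x/2)^(b-1)*(1+x/2) := by
    rw [← Real.rpow_add_one hu0.ne' (b-1), show b-1+1 = b by ring]
  have key := bernD b x hb0.le hb1 hx
  have eR : (b+1)*(x+1)^b = c^b*(1+x)^b := by rw [hcb]; ring_nf
  rw [e1, e2, eR]
  calc c^b*(1+x)^b
      ≤ c^b * ((1+x/2)^(b-1)*((1+x/2)+b*(x/2))) :=
        mul_le_mul_of_nonneg_left key (Real.rpow_nonneg hc.le b)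
    _ = c^b*(1+x/2)^b + x*(b*(c^(b-1)*(1+x/2)^(b-1))*(c/2)) := by
        rw [hbb, ← e3]; ring

private lemma bound_ge (a b c l : ℝ) (ha : 0 < a) (hb : 0 < b) (hc : 0 ≤ c) (hl : 0 ≤ l)
    (h : a*(c+l*a)^b ≤ (a+1)^(b+1) - 1) :
    c + l*a ≤ (((a+1)^(b+1) - 1)/a)^(1/b) := by
  have hcl : (0:ℝ) ≤ c + l*a := by positivity
  have hF : (c+l*a)^b ≤ ((a+1)^(b+1)-1)/a := (le_div_iff₀ ha).mpr (by linarith)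
  have h2 := Real.rpow_le_rpow (Real.rpow_nonneg hcl b) hF (by positivity : (0:ℝ) ≤ 1/b)
  rwa [← Real.rpow_mul hcl, mul_one_div, div_self hb.ne', Real.rpow_one] at h2

private lemma bound_le (a b c l : ℝ) (ha : 0 < a) (hb : 0 < b) (hc : 0 ≤ c) (hl : 0 ≤ l)
    (h : (a+1)^(b+1) - 1 ≤ a*(c+l*a)^b) :
    (((a+1)^(b+1) - 1)/a)^(1/b) ≤ c + l*a := by
  have hcl : (0:ℝ) ≤ c + l*a := by positivity
  have hnum : (0:ℝ) ≤ (a+1)^(b+1) - 1 := by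
    have h1 : (1:ℝ)^(b+1) ≤ (a+1)^(b+1) :=
      Real.rpow_le_rpow zero_le_one (by linarith) (by linarith)
    rw [Real.one_rpow] at h1
    linarith
  have hF : ((a+1)^(b+1)-1)/a ≤ (c+l*a)^b := (div_le_iff₀ ha).mpr (by linarith)
  have h2 := Real.rpow_le_rpow (by positivity) hF (by positivity : (0:ℝ) ≤ 1/b)
  rwa [← Real.rpow_mul hcl, mul_one_div, div_self hb.ne', Real.rpow_one] at h2


/-- Inequality (5.5): for a, b > 0,
a·min{(b+1)^{1/b}/2, 1} ≤ (((a+1)^{b+1} − 1)/a)^{1/b} − (b+1)^{1/b} ≤ a·max{(b+1)^{1/b}/2, 1};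
equivalently, for 0 < b ≤ 1 the middle quantity lies between a and a·(b+1)^{1/b}/2,
while for b ≥ 1 both of these inequalities are reversed. -/
theorem stmt15 (a b : ℝ) (ha : 0 < a) (hb : 0 < b) :
    (a * min ((b+1) ^ (1/b) / 2) 1
        ≤ (((a+1) ^ (b+1) - 1)/a) ^ (1/b) - (b+1) ^ (1/b) ∧
      (((a+1) ^ (b+1) - 1)/a) ^ (1/b) - (b+1) ^ (1/b)
        ≤ a * max ((b+1) ^ (1/b) / 2) 1) ∧
    (b ≤ 1 →
      a ≤ (((a+1) ^ (b+1) - 1)/a) ^ (1/b) - (b+1) ^ (1/b) ∧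
      (((a+1) ^ (b+1) - 1)/a) ^ (1/b) - (b+1) ^ (1/b) ≤ a * ((b+1) ^ (1/b) / 2)) ∧
    (1 ≤ b →
      a * ((b+1) ^ (1/b) / 2) ≤ (((a+1) ^ (b+1) - 1)/a) ^ (1/b) - (b+1) ^ (1/b) ∧
      (((a+1) ^ (b+1) - 1)/a) ^ (1/b) - (b+1) ^ (1/b) ≤ a) := by
  have hb1 : (0:ℝ) < b + 1 := by linarith
  have hc : 0 < (b+1)^(1/b) := Real.rpow_pos_of_pos hb1 _
  have hcb : ((b+1)^(1/b))^b = b+1 := by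
    rw [← Real.rpow_mul hb1.le, one_div, inv_mul_cancel₀ hb.ne', Real.rpow_one]
  set c := (b+1)^(1/b) with hcdef
  have P2 : b ≤ 1 →
      a ≤ (((a+1)^(b+1) - 1)/a)^(1/b) - c ∧
      (((a+1)^(b+1) - 1)/a)^(1/b) - c ≤ a * (c/2) := by
    intro hble
    constructor
    · have hK := K_nonneg b c 1 hc zero_le_one
        (fun x hx => sideB b c hb hble hc hcb x hx) a ha.le
      have h := bound_ge a b c 1 ha hb hc.le zero_le_one hK
      linarith
    · have hK := K_nonpos b c (c/2) hc (by positivity)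
        (fun x hx => sideD b c hb hble hc hcb x hx) a ha.le
      have h := bound_le a b c (c/2) ha hb hc.le (by positivity) hK
      linarith
  have P3 : 1 ≤ b →
      a * (c/2) ≤ (((a+1)^(b+1) - 1)/a)^(1/b) - c ∧
      (((a+1)^(b+1) - 1)/a)^(1/b) - c ≤ a := by
    intro hbge
    constructor
    · have hK := K_nonneg b c (c/2) hc (by positivity)
        (fun x hx => sideC b c hbge hc hcb x hx) a ha.le
      have h := bound_ge a b c (c/2) ha hb hc.le (by positivity) hK
      linarith
    · have hK := K_nonpos b c 1 hc zero_le_one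
        (fun x hx => sideA b c hbge hc hcb x hx) a ha.le
      have h := bound_le a b c 1 ha hb hc.le zero_le_one hK
      linarith
  refine ⟨?_, P2, P3⟩
  rcases le_total b 1 with h | h
  · have hber : (2:ℝ)^b ≤ 1 + b := by
      have h2 := rpow_one_add_le_one_add_mul_self (by norm_num : (-1:ℝ) ≤ 1) hb.le h
      norm_num at h2
      linarith
    have h2c : 2 ≤ c := by
      have h3 : ((2:ℝ)^b)^(1/b) ≤ (b+1)^(1/b) :=
        Real.rpow_le_rpow (by positivity) (by linarith) (by positivity)
      rwa [← Real.rpow_mul (by norm_num : (0:ℝ) ≤ 2), mul_one_div, div_self hb.ne',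
        Real.rpow_one] at h3
    rw [min_eq_right (by linarith : (1:ℝ) ≤ c/2), max_eq_left (by linarith : (1:ℝ) ≤ c/2)]
    obtain ⟨hl, hu⟩ := P2 h
    exact ⟨by linarith, hu⟩
  · have hber : 1 + b ≤ (2:ℝ)^b := by
      have h2 := one_add_mul_self_le_rpow_one_add (by norm_num : (-1:ℝ) ≤ 1) h
      norm_num at h2
      linarith
    have h2c : c ≤ 2 := by
      have h3 : (b+1)^(1/b) ≤ ((2:ℝ)^b)^(1/b) :=
        Real.rpow_le_rpow (by positivity) (by linarith) (by positivity)
      rwa [← Real.rpow_mul (by norm_num : (0:ℝ) ≤ 2), mul_one_div, div_self hb.ne',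
        Real.rpow_one] at h3
    rw [min_eq_left (by linarith : c/2 ≤ 1), max_eq_right (by linarith : c/2 ≤ 1)]
    obtain ⟨hl, hu⟩ := P3 h
    exact ⟨hl, by linarith⟩
end

section
/- For δ = 3 one has G(s) = (s − 1/s)² and s* = 1/s, and for every 0 < s < 1: (1/π)·∫_s^{1/s} du/√((s − 1/s)² − (u − 1/u)²) = 1/2; that is, ν_{f_3}(s) = 1/2 for all 0 < s < 1 (the corresponding center is isochronous). -/
open Set Filter Topology MeasureTheory intervalIntegral


lemma key_integral (s : ℝ) (hs0 : 0 < s) (hs1 : s < 1) :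
    ∫ u in s..(1/s), 1/Real.sqrt ((s - 1/s)^2 - (u - 1/u)^2) = Real.pi / 2 := by
  have hsinv : 1 < 1/s := by rw [lt_div_iff₀ hs0]; linarith
  have hle : s ≤ 1/s := le_of_lt (hs1.trans hsinv)
  set D : ℝ := 1/s^2 - s^2 with hDdef
  have hD : 0 < D := by
    have h2 : 1 < 1/s^2 := by rw [lt_div_iff₀ (by positivity : (0:ℝ) < s^2)]; nlinarith
    have h1 : s^2 < 1 := by nlinarith
    simp only [hDdef]; linarith
  set F : ℝ → ℝ := fun u => (1/2) * Real.arcsin ((2*u^2 - s^2 - 1/s^2) / D) with hFdef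
  set f' : ℝ → ℝ := fun u => 1/Real.sqrt ((s - 1/s)^2 - (u - 1/u)^2) with hf'def
  have hcont : Continuous F := by
    apply continuous_const.mul
    exact Real.continuous_arcsin.comp
      ((((continuous_const.mul (continuous_pow 2)).sub continuous_const).sub
        continuous_const).div_const D)
  have hderiv : ∀ u ∈ Ioo s (1/s), HasDerivAt F (f' u) u := by
    intro u hu
    obtain ⟨hus, husv⟩ := hu
    have hu0 : 0 < u := hs0.trans hus
    have hu2 : u^2 < 1/s^2 := by
      have h := mul_self_lt_mul_self hu0.le husv
      calc u^2 = u*u := sq u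
      _ < (1/s)*(1/s) := h
      _ = 1/s^2 := by rw [div_mul_div_comm, one_mul, ← sq]
    set X : ℝ := (2*u^2 - s^2 - 1/s^2) / D with hXdef
    have hX1 : -1 < X := by
      rw [hXdef, lt_div_iff₀ hD, hDdef]
      nlinarith
    have hX2 : X < 1 := by
      rw [hXdef, div_lt_one hD, hDdef]
      linarith
    have hg : HasDerivAt (fun v : ℝ => (2*v^2 - s^2 - 1/s^2) / D) (4*u/D) u := by
      have h := (((hasDerivAt_pow 2 u).const_mul (2:ℝ)).sub_const (s^2)).sub_const (1/s^2)
      have h3 := h.div_const D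
      exact h3.congr_deriv (by norm_num; ring)
    have harc := (Real.hasDerivAt_arcsin (ne_of_gt hX1) (ne_of_lt hX2)).comp u hg
    have hF := harc.const_mul (1/2 : ℝ)
    have hfun : (fun v => (1/2 : ℝ) * (Real.arcsin ∘ fun v : ℝ => (2*v^2 - s^2 - 1/s^2) / D) v) = F := by
      funext v; simp [hFdef, Function.comp]
    rw [hfun] at hF
    set P : ℝ := (u^2 - s^2) * (1/s^2 - u^2) with hPdef
    have hP : 0 < P := by
      apply mul_pos
      · nlinarith
      · linarith
    have hsqP : 0 < Real.sqrt P := Real.sqrt_pos.mpr hP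
    have hNe : X * D = 2*u^2 - s^2 - 1/s^2 := div_mul_cancel₀ _ hD.ne'
    have hkey2 : (1 - X^2) * D^2 = 2^2 * P := by
      calc (1 - X^2) * D^2 = D^2 - (X*D)^2 := by ring
      _ = (1/s^2 - s^2)^2 - (2*u^2 - s^2 - 1/s^2)^2 := by rw [hNe, hDdef]
      _ = 2^2 * P := by rw [hPdef]; field_simp; ring
    have hsq1 : Real.sqrt (1 - X^2) = 2 * Real.sqrt P / D := by
      have h4 : (2 * Real.sqrt P / D)^2 = 2^2 * P / D^2 := by
        rw [div_pow, mul_pow, Real.sq_sqrt hP.le]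
      have h1 : 1 - X^2 = (2 * Real.sqrt P / D)^2 := by
        rw [h4, eq_div_iff (pow_ne_zero 2 hD.ne')]
        linear_combination hkey2
      rw [h1, Real.sqrt_sq (by positivity)]
    have h2 : (s - 1/s)^2 - (u - 1/u)^2 = (1/u)^2 * P := by
      rw [hPdef]
      field_simp
      ring
    have hsq2 : Real.sqrt ((s - 1/s)^2 - (u - 1/u)^2) = Real.sqrt P / u := by
      rw [h2, Real.sqrt_mul (sq_nonneg _), Real.sqrt_sq (by positivity)]
      ring
    have hval : (1/2 : ℝ) * (1 / Real.sqrt (1 - X^2) * (4*u/D)) = f' u := by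
      rw [hsq1, hf'def]
      simp only
      rw [hsq2]
      field_simp
      ring
    rw [← hval]
    exact hF
  have hnonneg : ∀ u ∈ Ioo s (1/s), 0 ≤ f' u := by
    intro u _
    exact div_nonneg zero_le_one (Real.sqrt_nonneg _)
  have hmin : s ⊓ (1/s) = s := inf_eq_left.mpr hle
  have hmax : s ⊔ (1/s) = 1/s := sup_eq_right.mpr hle
  have hint : IntervalIntegrable f' MeasureTheory.volume s (1/s) := by
    apply intervalIntegral.intervalIntegrable_deriv_of_nonneg hcont.continuousOn
    · rw [hmin, hmax]; exact hderiv
    · rw [hmin, hmax]; exact hnonneg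
  have key := intervalIntegral.integral_eq_sub_of_hasDerivAt_of_le hle hcont.continuousOn hderiv hint
  rw [hf'def] at key
  simp only at key
  rw [key, hFdef]
  have e1 : (2*(1/s)^2 - s^2 - 1/s^2) / D = 1 := by
    rw [div_eq_one_iff_eq hD.ne', hDdef]
    field_simp
    ring
  have e2 : (2*s^2 - s^2 - 1/s^2) / D = -1 := by
    rw [div_eq_iff hD.ne', hDdef]
    field_simp
    ring
  simp only [e1, e2, Real.arcsin_one, Real.arcsin_neg_one]
  ring

/-- For δ = 3 one has G(s) = (s − 1/s)², s* = 1/s, and ν_{f₃}(s) = 1/2 for every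
0 < s < 1, given explicitly by (1/π)∫_s^{1/s} du/√((s − 1/s)² − (u − 1/u)²) = 1/2:
the corresponding center is isochronous. -/
theorem stmt19 (G sStar ν : ℝ → ℝ)
    (hG : ∀ s ∈ Set.Ioi (0:ℝ),
      G s = s^2 + (2/((3:ℝ)-1)) * s ^ ((1:ℝ)-3) - ((3:ℝ)+1)/((3:ℝ)-1))
    (hsStar : ∀ s ∈ Set.Ioo (0:ℝ) 1, 1 < sStar s ∧ G (sStar s) = G s)
    (hν : ∀ s ∈ Set.Ioo (0:ℝ) 1,
      ν s = (1/Real.pi) * ∫ u in s..(sStar s), 1/Real.sqrt (G s - G u)) :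
    (∀ s ∈ Set.Ioi (0:ℝ), G s = (s - 1/s)^2) ∧
    (∀ s ∈ Set.Ioo (0:ℝ) 1, sStar s = 1/s) ∧
    (∀ s ∈ Set.Ioo (0:ℝ) 1,
      (1/Real.pi) * (∫ u in s..(1/s), 1/Real.sqrt ((s - 1/s)^2 - (u - 1/u)^2)) = 1/2 ∧
      ν s = 1/2) := by
  have hG3 : ∀ s ∈ Set.Ioi (0:ℝ), G s = (s - 1/s)^2 := by
    intro s hs
    have hs0 : (0:ℝ) < s := hs
    rw [hG s hs, show ((1:ℝ)-3) = ((-2:ℤ):ℝ) by norm_num, Real.rpow_intCast]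
    have h2 : s ^ (-2:ℤ) = (s^2)⁻¹ := by
      rw [zpow_neg]; norm_cast
    rw [h2]
    field_simp
    ring
  have hStar3 : ∀ s ∈ Set.Ioo (0:ℝ) 1, sStar s = 1/s := by
    rintro s ⟨hs0, hs1⟩
    obtain ⟨ht1, hte⟩ := hsStar s ⟨hs0, hs1⟩
    set t := sStar s with htdef
    have h0t : (0:ℝ) < t := lt_trans one_pos ht1
    have hEq : (t - 1/t)^2 = (s - 1/s)^2 := by
      rw [← hG3 t (Set.mem_Ioi.mpr h0t), ← hG3 s (Set.mem_Ioi.mpr hs0)]; exact hte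
    have ha : 0 < t - 1/t := by
      have : 1/t < t := by rw [div_lt_iff₀ h0t]; nlinarith
      linarith
    have hb : 0 < 1/s - s := by
      have : s < 1/s := by rw [lt_div_iff₀ hs0]; nlinarith
      linarith
    have hEq2 : (t - 1/t)^2 = (1/s - s)^2 := by rw [hEq]; ring
    have h3 : (t - 1/t - (1/s - s)) * (t - 1/t + (1/s - s)) = 0 := by
      linear_combination hEq2
    have hE : t - 1/t = 1/s - s := by
      rcases mul_eq_zero.mp h3 with h | h
      · linarith
      · linarith
    have hE2 : t * s * (t - 1/t) = t * s * (1/s - s) := by rw [hE]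
    have h4' : t * s * ((t + s) * (t*s - 1)) = 0 := by
      field_simp at hE2
      linear_combination (t * s) * hE2
    have h4 : (t + s) * (t*s - 1) = 0 := by
      rcases mul_eq_zero.mp h4' with h | h
      · exact absurd h (by positivity)
      · exact h
    rcases mul_eq_zero.mp h4 with h | h
    · linarith
    · rw [eq_div_iff hs0.ne']; linarith
  refine ⟨hG3, hStar3, ?_⟩
  rintro s ⟨hs0, hs1⟩
  have hsinv : 1 < 1/s := by rw [lt_div_iff₀ hs0]; nlinarith
  have hle : s ≤ 1/s := le_of_lt (hs1.trans hsinv)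
  have hpi := Real.pi_ne_zero
  have hhalf : (1/Real.pi) * (∫ u in s..(1/s), 1/Real.sqrt ((s - 1/s)^2 - (u - 1/u)^2)) = 1/2 := by
    rw [key_integral s hs0 hs1]
    field_simp
  refine ⟨hhalf, ?_⟩
  rw [hν s ⟨hs0, hs1⟩, hStar3 s ⟨hs0, hs1⟩]
  have hEqInt : (∫ u in s..(1/s), 1/Real.sqrt (G s - G u))
      = ∫ u in s..(1/s), 1/Real.sqrt ((s - 1/s)^2 - (u - 1/u)^2) := by
    apply intervalIntegral.integral_congr
    intro u hu
    rw [Set.uIcc_of_le hle] at hu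
    have hu0 : 0 < u := lt_of_lt_of_le hs0 hu.1
    simp only [hG3 s (Set.mem_Ioi.mpr hs0), hG3 u (Set.mem_Ioi.mpr hu0)]
  rw [hEqInt]
  exact hhalf
end
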